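/- Let m_α > 0, m_{2α} ≥ 0, set ρ = (m_α + 2 m_{2α})/2, and define γ(u) = Γ(u + m_α/2) Γ(u/2 + ρ/2) / ( Γ(u + 1) Γ(u/2 + m_α/4) ) for u ≥ 0 and q_t(r) = γ( ρ r / √(t² + r²) ) · t · r · (t² + r²)^{−5/4} · exp( −ρ r − ρ √(t² + r²) ) for t, r > 0. Then for every ξ > 0 and every ε ∈ (0,1/2) there exist constants C > 0 and t₀ > 0 such that for all t ≥ t₀, all r ∈ [t^{2−ε}, t^{2+ε}] and all s > 0 with |r − s| ≤ ξ: | q_t(s)/q_t(r) − e^{2ρ(r − s)} | ≤ C t^{−2+4ε}. -/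

import Mathlib

open Real Filter

/-- The factor `γ(u)` appearing in the large-time asymptotics of the Poisson kernel on a rank
one non-compact symmetric space with root multiplicities `mα`, `m2α` and `ρ = (mα+2m2α)/2`. -/
noncomputable def gammaFactor (mα ρ u : ℝ) : ℝ :=
  Real.Gamma (u + mα/2) * Real.Gamma (u/2 + ρ/2) /
    (Real.Gamma (u + 1) * Real.Gamma (u/2 + mα/4))

/-- The large-time asymptotic profile of the Poisson kernel at distance `r`. -/
noncomputable def qProfile (mα ρ t r : ℝ) : ℝ :=
  gammaFactor mα ρ (ρ * r / Real.sqrt (t^2 + r^2)) * t * r * (t^2 + r^2) ^ (-(5/4 : ℝ)) *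
    Real.exp (-ρ * r - ρ * Real.sqrt (t^2 + r^2))

section Helpers

open Set

lemma analyticAt_realGamma {x : ℝ} (hx : 0 < x) : AnalyticAt ℝ Real.Gamma x := by
  have hopen : IsOpen {z : ℂ | 0 < z.re} := isOpen_lt continuous_const Complex.continuous_re
  have hC : AnalyticOnNhd ℂ Complex.Gamma {z : ℂ | 0 < z.re} := by
    refine DifferentiableOn.analyticOnNhd (fun z hz => ?_) hopen
    exact (Complex.differentiableAt_Gamma z (fun m => by
      intro h; rw [h] at hz; simp at hz
      nlinarith [hz, (Nat.cast_nonneg m : (0:ℝ) ≤ m)])).differentiableWithinAt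
  have hA : AnalyticAt ℂ Complex.Gamma (x : ℂ) := hC _ (by simpa using hx)
  have h1 : AnalyticAt ℝ (fun y : ℝ => (Complex.Gamma (y : ℂ)).re) x := by
    apply (Complex.reCLM.analyticAt _).comp
    exact (hA.restrictScalars).comp (Complex.ofRealCLM.analyticAt _)
  have : Real.Gamma = fun y : ℝ => (Complex.Gamma (y : ℂ)).re := by
    funext y; rw [Complex.Gamma_ofReal, Complex.ofReal_re]
  rw [this]; exact h1

lemma gammaFactor_pos {mα ρ u : ℝ} (hmα : 0 < mα) (hρ : 0 < ρ) (hu : 0 < u) :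
    0 < gammaFactor mα ρ u := by
  unfold gammaFactor
  apply div_pos
  · exact mul_pos (Real.Gamma_pos_of_pos (by linarith)) (Real.Gamma_pos_of_pos (by linarith))
  · exact mul_pos (Real.Gamma_pos_of_pos (by linarith)) (Real.Gamma_pos_of_pos (by linarith))

lemma gammaFactor_analyticAt {mα ρ u : ℝ} (hmα : 0 < mα) (hρ : 0 < ρ) (hu : 0 < u) :
    AnalyticAt ℝ (gammaFactor mα ρ) u := by
  have h1 : AnalyticAt ℝ (fun u : ℝ => Real.Gamma (u + mα/2)) u :=
    (analyticAt_realGamma (by linarith)).comp ((analyticAt_id).add analyticAt_const)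
  have h2 : AnalyticAt ℝ (fun u : ℝ => Real.Gamma (u/2 + ρ/2)) u := by
    refine (analyticAt_realGamma (by linarith)).comp ?_
    exact ((analyticAt_id).div analyticAt_const (by norm_num)).add analyticAt_const
  have h3 : AnalyticAt ℝ (fun u : ℝ => Real.Gamma (u + 1)) u :=
    (analyticAt_realGamma (by linarith)).comp ((analyticAt_id).add analyticAt_const)
  have h4 : AnalyticAt ℝ (fun u : ℝ => Real.Gamma (u/2 + mα/4)) u := by
    refine (analyticAt_realGamma (by linarith)).comp ?_
    exact ((analyticAt_id).div analyticAt_const (by norm_num)).add analyticAt_const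
  exact (h1.mul h2).div (h3.mul h4) (ne_of_gt (mul_pos
    (Real.Gamma_pos_of_pos (by linarith)) (Real.Gamma_pos_of_pos (by linarith))))

lemma gammaFactor_lip {mα ρ : ℝ} (hmα : 0 < mα) (hρ : 0 < ρ) :
    ∃ L c : ℝ, 0 ≤ L ∧ 0 < c ∧
      (∀ a ∈ Icc (ρ/2) ρ, c ≤ gammaFactor mα ρ a) ∧
      (∀ a ∈ Icc (ρ/2) ρ, ∀ b ∈ Icc (ρ/2) ρ,
        |gammaFactor mα ρ a - gammaFactor mα ρ b| ≤ L * |a - b|) := by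
  have hsub : Icc (ρ/2) ρ ⊆ Ioi (0:ℝ) := fun x hx => lt_of_lt_of_le (by linarith) hx.1
  have hAn : ∀ x ∈ Ioi (0:ℝ), AnalyticAt ℝ (gammaFactor mα ρ) x :=
    fun x hx => gammaFactor_analyticAt hmα hρ hx
  have hAnN : AnalyticOnNhd ℝ (gammaFactor mα ρ) (Ioi (0:ℝ)) := fun x hx => hAn x hx
  have hderivcont : ContinuousOn (deriv (gammaFactor mα ρ)) (Ioi (0:ℝ)) :=
    (hAnN.deriv).continuousOn
  have hcomp : IsCompact (Icc (ρ/2) ρ) := isCompact_Icc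
  obtain ⟨M, hM⟩ := hcomp.exists_bound_of_continuousOn (hderivcont.mono hsub)
  have hcontOn : ContinuousOn (gammaFactor mα ρ) (Icc (ρ/2) ρ) :=
    fun x hx => ((hAn x (hsub hx)).continuousAt).continuousWithinAt
  obtain ⟨z, hz, hzmin⟩ := hcomp.exists_isMinOn (nonempty_Icc.2 (by linarith)) hcontOn
  refine ⟨max M 0, gammaFactor mα ρ z, le_max_right _ _,
    gammaFactor_pos hmα hρ (hsub hz), fun a ha => hzmin ha, fun a ha b hb => ?_⟩
  have := Convex.norm_image_sub_le_of_norm_deriv_le (C := max M 0)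
    (fun x hx => (hAn x (hsub hx)).differentiableAt)
    (fun x hx => le_trans (hM x hx) (le_max_left M 0)) (convex_Icc _ _) hb ha
  simpa [Real.norm_eq_abs] using this

lemma mul_near_one {x y ex ey : ℝ} (hx : |x - 1| ≤ ex) (hy : |y - 1| ≤ ey) :
    |x * y - 1| ≤ ex + ey + ex * ey := by
  have hex : 0 ≤ ex := le_trans (abs_nonneg _) hx
  have hey : 0 ≤ ey := le_trans (abs_nonneg _) hy
  have h : x * y - 1 = (x - 1) * (y - 1) + (x - 1) + (y - 1) := by ring
  rw [h]
  calc |(x - 1) * (y - 1) + (x - 1) + (y - 1)|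
      ≤ |(x - 1) * (y - 1) + (x - 1)| + |y - 1| := abs_add_le _ _
    _ ≤ |(x - 1) * (y - 1)| + |x - 1| + |y - 1| := by
        exact add_le_add (abs_add_le _ _) le_rfl
    _ ≤ ex * ey + ex + ey := by
        rw [abs_mul]
        exact add_le_add (add_le_add (mul_le_mul hx hy (abs_nonneg _) hex) hx) hy
    _ = ex + ey + ex * ey := by ring

lemma prod4_near_one {a b c d e : ℝ} (ha : |a - 1| ≤ e) (hb : |b - 1| ≤ e)
    (hc : |c - 1| ≤ e) (hd : |d - 1| ≤ e) (he : e ≤ 1/2) :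
    |a * b * c * d - 1| ≤ 9 * e := by
  have he0 : 0 ≤ e := le_trans (abs_nonneg _) ha
  have hab := mul_near_one ha hb
  have habc := mul_near_one hab hc
  have habcd := mul_near_one habc hd
  refine le_trans habcd ?_
  nlinarith [sq_nonneg e, sq_nonneg (e*e)]

lemma abs_log_le {Q : ℝ} (h : 1/2 ≤ Q) : |Real.log Q| ≤ 2 * |Q - 1| := by
  have hQ : 0 < Q := by linarith
  rcases le_or_gt 1 Q with h1 | h1
  · have h2 : Real.log Q ≤ Q - 1 := by
      have := Real.log_le_sub_one_of_pos hQ; linarith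
    have h3 : 0 ≤ Real.log Q := Real.log_nonneg h1
    rw [abs_of_nonneg h3, abs_of_nonneg (by linarith : (0:ℝ) ≤ Q - 1)]
    linarith
  · have h2 : Real.log Q⁻¹ ≤ Q⁻¹ - 1 := by
      have := Real.log_le_sub_one_of_pos (inv_pos.2 hQ); linarith
    rw [Real.log_inv] at h2
    have h4 : Real.log Q < 0 := Real.log_neg hQ h1
    rw [abs_of_neg h4, abs_of_neg (by linarith : Q - 1 < 0)]
    have h5 : Q⁻¹ - 1 = (1 - Q)/Q := by field_simp
    rw [h5] at h2
    have h6 : (1 - Q)/Q ≤ 2*(1 - Q) := by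
      rw [div_le_iff₀ hQ]; nlinarith
    linarith

lemma sqrt_sub_eq {t x : ℝ} (ht : 0 < t) (hx : 0 < x) :
    Real.sqrt (t^2 + x^2) - x = t^2 / (Real.sqrt (t^2 + x^2) + x) := by
  have hA : Real.sqrt (t^2 + x^2) ^ 2 = t^2 + x^2 :=
    Real.sq_sqrt (by positivity)
  have hAx : 0 < Real.sqrt (t^2 + x^2) + x := by positivity
  rw [eq_div_iff (ne_of_gt hAx)]
  nlinarith [hA]

lemma sqrt_ge {t x : ℝ} (ht : 0 ≤ t) (hx : 0 ≤ x) : x ≤ Real.sqrt (t^2 + x^2) := by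
  have h := Real.sq_sqrt (show (0:ℝ) ≤ t^2 + x^2 by positivity)
  nlinarith [Real.sqrt_nonneg (t^2 + x^2)]

lemma sqrt_le_add {t x : ℝ} (ht : 0 ≤ t) (hx : 0 ≤ x) :
    Real.sqrt (t^2 + x^2) ≤ t + x := by
  have h : t^2 + x^2 ≤ (t+x)^2 := by nlinarith
  exact le_trans (Real.sqrt_le_sqrt h) (le_of_eq (Real.sqrt_sq (by linarith)))

end Helpers

set_option maxHeartbeats 1000000 in
/-- Poisson-profile quotient asymptotics in the critical region:
for `r ∈ [t^{2-ε}, t^{2+ε}]` and `|r-s| ≤ ξ`, one has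
`q_t(s)/q_t(r) = e^{2ρ(r-s)} + O(t^{-2+4ε})`. -/
theorem stmt_17
    (mα m2α : ℝ) (hmα : 0 < mα) (hm2α : 0 ≤ m2α)
    (ρ : ℝ) (hρ : ρ = (mα + 2*m2α)/2) :
    ∀ ξ : ℝ, 0 < ξ → ∀ ε : ℝ, 0 < ε → ε < 1/2 →
      ∃ C t₀ : ℝ, 0 < C ∧ 0 < t₀ ∧ ∀ t : ℝ, t₀ ≤ t →
        ∀ r : ℝ, t ^ (2-ε) ≤ r → r ≤ t ^ (2+ε) →
        ∀ s : ℝ, 0 < s → |r - s| ≤ ξ →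
          |qProfile mα ρ t s / qProfile mα ρ t r - Real.exp (2*ρ*(r - s))|
            ≤ C * t ^ (-2 + 4*ε) := by
  intro ξ hξ ε hε hε2
  have hρ0 : 0 < ρ := by rw [hρ]; linarith
  obtain ⟨L, c, hL0, hc0, hmin, hlip⟩ := gammaFactor_lip hmα hρ0
  have hLc : 0 ≤ L / c := div_nonneg hL0 hc0.le
  set K : ℝ := 3*ρ*(L/c) + 20*ξ + 6*ρ*ξ + ξ + 1 with hKdef
  clear_value K
  have hLc3 : 0 ≤ 3*ρ*(L/c) := by positivity
  have hρξ : 0 < ρ*ξ := mul_pos hρ0 hξ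
  have hK1 : 1 ≤ K := by rw [hKdef]; linarith only [hLc3, hρξ, hξ]
  have hKpos : 0 < K := by linarith only [hK1]
  refine ⟨9*K*Real.exp (2*ρ*ξ), max (max 4 ξ) (4*K),
    mul_pos (mul_pos (by norm_num) hKpos) (Real.exp_pos _), ?_, ?_⟩
  · apply lt_of_lt_of_le (show (0:ℝ) < 4 by norm_num)
    exact le_trans (le_max_left _ _) (le_max_left _ _)
  intro t ht r hr1 hr2 s hs hrs
  have ht4 : (4:ℝ) ≤ t := le_trans (le_trans (le_max_left _ _) (le_max_left _ _)) ht
  have htξ : ξ ≤ t := le_trans (le_trans (le_max_right 4 ξ) (le_max_left _ _)) ht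
  have htK : 4*K ≤ t := le_trans (le_max_right _ _) ht
  have ht0 : (0:ℝ) < t := by linarith only [ht4]
  have ht1 : (1:ℝ) ≤ t := by linarith only [ht4]
  set δ : ℝ := t ^ (-2 + 2*ε) with hδdef
  clear_value δ
  have hδ0 : 0 < δ := by rw [hδdef]; positivity
  have hδt : δ ≤ 1/t := by
    have h := Real.rpow_le_rpow_of_exponent_le ht1 (show -2 + 2*ε ≤ -1 by linarith only [hε2])
    rw [Real.rpow_neg_one] at h
    rw [hδdef, one_div]; exact h
  have hKδ : K * δ ≤ 1/4 := by
    have h1 : K * δ ≤ K * (1/t) := mul_le_mul_of_nonneg_left hδt hKpos.le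
    have h2 : K * (1/t) ≤ 1/4 := by
      rw [mul_one_div, div_le_div_iff₀ ht0 (by norm_num : (0:ℝ) < 4)]
      linarith only [htK]
    linarith only [h1, h2]
  -- bounds on r, s, t
  have hrt32 : t ^ ((3:ℝ)/2) ≤ r :=
    le_trans (Real.rpow_le_rpow_of_exponent_le ht1 (by linarith only [hε2])) hr1
  have h2t_le_r : 2*t ≤ r := by
    have h32 : t ^ ((3:ℝ)/2) = t * Real.sqrt t := by
      rw [show ((3:ℝ)/2) = 1 + 1/2 by norm_num, Real.rpow_add ht0, Real.rpow_one,
        ← Real.sqrt_eq_rpow]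
    have hsq : 2 ≤ Real.sqrt t := by
      have h1 : Real.sqrt 4 ≤ Real.sqrt t := Real.sqrt_le_sqrt ht4
      have h2 : Real.sqrt 4 = 2 := by
        rw [show (4:ℝ) = 2^2 by norm_num, Real.sqrt_sq (by norm_num : (0:ℝ) ≤ 2)]
      linarith only [h1, h2]
    linarith only [hrt32, h32, mul_le_mul_of_nonneg_left hsq ht0.le]
  have hr0 : (0:ℝ) < r := by linarith only [h2t_le_r, ht0]
  have htr2 : t ≤ r/2 := by linarith only [h2t_le_r]
  have habsrs := abs_le.mp hrs
  have hs_ge : r/2 ≤ s := by linarith only [habsrs.2, htξ, htr2]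
  have hs_le : s ≤ 2*r := by linarith only [habsrs.1, htξ, htr2, hr0]
  have hts : t ≤ s := by linarith only [htr2, hs_ge]
  -- rpow arithmetic : t^2/r^2 ≤ δ and 1/r ≤ δ
  have ht2r2 : t^2/r^2 ≤ δ := by
    have hA : t ^ ((4:ℝ) - 2*ε) ≤ r^2 := by
      have hpos : 0 < t ^ (2-ε) := Real.rpow_pos_of_pos ht0 _
      have h1 : (t ^ (2-ε)) ^ 2 ≤ r ^ 2 := pow_le_pow_left₀ hpos.le hr1 2
      have h2 : (t ^ (2-ε)) ^ 2 = t ^ ((4:ℝ) - 2*ε) := by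
        rw [← Real.rpow_natCast (t ^ (2-ε)) 2, ← Real.rpow_mul ht0.le]
        norm_num; ring_nf
      rw [h2] at h1; exact h1
    have hB : t^2/r^2 ≤ t^2 / t ^ ((4:ℝ) - 2*ε) :=
      div_le_div_of_nonneg_left (by positivity) (Real.rpow_pos_of_pos ht0 _) hA
    have hC : t^2 / t ^ ((4:ℝ) - 2*ε) = δ := by
      rw [hδdef, show (t:ℝ)^2 = t ^ ((2:ℕ):ℝ) by rw [Real.rpow_natCast],
        ← Real.rpow_sub ht0]
      congr 1
      push_cast; ring
    rw [hC] at hB; exact hB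
  have hinvr : 1/r ≤ δ := by
    have h2 : t ^ (-(2-ε)) ≤ δ := by
      rw [hδdef]
      exact Real.rpow_le_rpow_of_exponent_le ht1 (by linarith only [hε])
    have h3 : 1/r ≤ 1/t ^ (2-ε) :=
      div_le_div_of_nonneg_left (by norm_num) (Real.rpow_pos_of_pos ht0 _) hr1
    have h4 : (1:ℝ)/t ^ (2-ε) = t ^ (-(2-ε)) := by
      rw [Real.rpow_neg ht0.le, one_div]
    rw [h4] at h3
    exact le_trans h3 h2
  -- square roots
  set Ar := Real.sqrt (t^2 + r^2) with hArdef
  set As := Real.sqrt (t^2 + s^2) with hAsdef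
  clear_value Ar As
  have hAr0 : 0 < Ar := by rw [hArdef]; positivity
  have hAs0 : 0 < As := by rw [hAsdef]; positivity
  have hArr : r ≤ Ar := by rw [hArdef]; exact sqrt_ge ht0.le hr0.le
  have hAss : s ≤ As := by rw [hAsdef]; exact sqrt_ge ht0.le hs.le
  have hAr2r : Ar ≤ 2*r := by
    rw [hArdef]
    exact le_trans (sqrt_le_add ht0.le hr0.le) (by linarith only [htr2, hr0])
  have hAs2s : As ≤ 2*s := by
    rw [hAsdef]
    exact le_trans (sqrt_le_add ht0.le hs.le) (by linarith only [hts, hs])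
  have hArsub : Ar - r = t^2/(Ar + r) := by rw [hArdef]; exact sqrt_sub_eq ht0 hr0
  have hAssub : As - s = t^2/(As + s) := by rw [hAsdef]; exact sqrt_sub_eq ht0 hs
  have hArr_le : Ar - r ≤ t^2/(2*r) := by
    rw [hArsub]
    exact div_le_div_of_nonneg_left (by positivity) (by linarith only [hr0])
      (by linarith only [hArr])
  have hAss_le : As - s ≤ t^2/(2*s) := by
    rw [hAssub]
    exact div_le_div_of_nonneg_left (by positivity) (by linarith only [hs])
      (by linarith only [hAss])
  have hAr_sq : Ar^2 = t^2 + r^2 := by rw [hArdef]; exact Real.sq_sqrt (by positivity)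
  have hAs_sq : As^2 = t^2 + s^2 := by rw [hAsdef]; exact Real.sq_sqrt (by positivity)
  -- the u arguments
  set ur := ρ * r / Ar with hurdef
  set us := ρ * s / As with husdef
  clear_value ur us
  have hurI : ur ∈ Set.Icc (ρ/2) ρ := by
    constructor
    · rw [hurdef, le_div_iff₀ hAr0]
      linarith only [mul_le_mul_of_nonneg_left hAr2r hρ0.le]
    · rw [hurdef, div_le_iff₀ hAr0]
      linarith only [mul_le_mul_of_nonneg_left hArr hρ0.le]
  have husI : us ∈ Set.Icc (ρ/2) ρ := by
    constructor
    · rw [husdef, le_div_iff₀ hAs0]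
      linarith only [mul_le_mul_of_nonneg_left hAs2s hρ0.le]
    · rw [husdef, div_le_iff₀ hAs0]
      linarith only [mul_le_mul_of_nonneg_left hAss hρ0.le]
  -- closeness of ur, us to ρ
  have hur_close : ρ - ur ≤ ρ * δ := by
    have h1 : ρ - ur = ρ * (Ar - r) / Ar := by
      rw [hurdef]; field_simp
    rw [h1]
    have h2 : ρ * (Ar - r) / Ar ≤ ρ * (t^2/(2*r)) / r :=
      div_le_div₀ (by positivity)
        (mul_le_mul_of_nonneg_left hArr_le hρ0.le) hr0 hArr
    have h3 : ρ * (t^2/(2*r)) / r = ρ/2 * (t^2/r^2) := by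
      field_simp
    rw [h3] at h2
    have h4 : ρ * (t^2/r^2) ≤ ρ * δ := mul_le_mul_of_nonneg_left ht2r2 hρ0.le
    have h5 : 0 ≤ ρ * (t^2/r^2) := by positivity
    linarith only [h2, h4, h5]
  have hus_close : ρ - us ≤ 2 * ρ * δ := by
    have h1 : ρ - us = ρ * (As - s) / As := by
      rw [husdef]; field_simp
    rw [h1]
    have h2 : ρ * (As - s) / As ≤ ρ * (t^2/(2*s)) / s :=
      div_le_div₀ (by positivity)
        (mul_le_mul_of_nonneg_left hAss_le hρ0.le) hs hAss
    have h3 : ρ * (t^2/(2*s)) / s = ρ/2 * (t^2/s^2) := by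
      field_simp
    rw [h3] at h2
    have hss : r^2/4 ≤ s^2 := by
      have := mul_nonneg (by linarith only [hs_ge] : (0:ℝ) ≤ s - r/2)
        (by linarith only [hs_ge, hr0] : (0:ℝ) ≤ s + r/2)
      nlinarith only [this]
    have h4 : t^2/s^2 ≤ t^2/(r^2/4) :=
      div_le_div_of_nonneg_left (by positivity) (by positivity) hss
    have h5 : t^2/(r^2/4) = 4*(t^2/r^2) := by
      field_simp
    rw [h5] at h4
    have h6 : t^2/s^2 ≤ 4*δ := by linarith only [h4, ht2r2]
    have h7 : ρ * (t^2/s^2) ≤ ρ * (4*δ) := mul_le_mul_of_nonneg_left h6 hρ0.le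
    have h8 : 0 ≤ ρ * (t^2/s^2) := by positivity
    linarith only [h2, h7, h8]
  have hρδ : 0 ≤ ρ*δ := mul_nonneg hρ0.le hδ0.le
  have hu_diff : |us - ur| ≤ 3 * ρ * δ := by
    rw [abs_le]
    constructor
    · linarith only [hur_close, hus_close, hurI.2, husI.2, hρδ]
    · linarith only [hur_close, hus_close, hurI.2, husI.2, hρδ]
  -- factor G
  have hγur_pos : 0 < gammaFactor mα ρ ur := lt_of_lt_of_le hc0 (hmin ur hurI)
  have hγus_pos : 0 < gammaFactor mα ρ us := lt_of_lt_of_le hc0 (hmin us husI)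
  have hG : |gammaFactor mα ρ us / gammaFactor mα ρ ur - 1| ≤ K * δ := by
    have h1 : gammaFactor mα ρ us / gammaFactor mα ρ ur - 1
        = (gammaFactor mα ρ us - gammaFactor mα ρ ur) / gammaFactor mα ρ ur := by
      field_simp
    rw [h1, abs_div, abs_of_pos hγur_pos]
    have h2 : |gammaFactor mα ρ us - gammaFactor mα ρ ur| ≤ L * (3 * ρ * δ) :=
      le_trans (hlip us husI ur hurI) (mul_le_mul_of_nonneg_left hu_diff hL0)
    have h3 : |gammaFactor mα ρ us - gammaFactor mα ρ ur| / gammaFactor mα ρ ur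
        ≤ L * (3 * ρ * δ) / c :=
      div_le_div₀ (mul_nonneg hL0 (mul_nonneg (mul_nonneg (by norm_num) hρ0.le) hδ0.le))
        h2 hc0 (hmin ur hurI)
    refine le_trans h3 ?_
    have h4 : L * (3 * ρ * δ) / c = 3*ρ*(L/c) * δ := by ring
    rw [h4]
    have h5 : 3*ρ*(L/c) ≤ K := by
      rw [hKdef]; linarith only [hρξ, hξ]
    exact mul_le_mul_of_nonneg_right h5 hδ0.le
  -- factor S
  have hξK : ξ ≤ K := by rw [hKdef]; linarith only [hLc3, hρξ, hξ]
  have hS : |s/r - 1| ≤ K * δ := by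
    have h1 : s/r - 1 = (s - r)/r := by field_simp
    rw [h1, abs_div, abs_of_pos hr0]
    have h2 : |s - r| ≤ ξ := by rw [abs_sub_comm]; exact hrs
    have h3 : |s - r|/r ≤ ξ * (1/r) := by
      rw [mul_one_div]; gcongr
    have h4 : ξ * (1/r) ≤ ξ * δ := mul_le_mul_of_nonneg_left hinvr hξ.le
    have h5 : ξ * δ ≤ K * δ := mul_le_mul_of_nonneg_right hξK hδ0.le
    linarith only [h3, h4, h5]
  -- factor P
  set Q : ℝ := (t^2 + s^2)/(t^2 + r^2) with hQdef
  clear_value Q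
  have hrp : (0:ℝ) < t^2 + r^2 := by positivity
  have hsp : (0:ℝ) < t^2 + s^2 := by positivity
  have hQ0 : 0 < Q := by rw [hQdef]; positivity
  have hξδ : 0 ≤ ξ*δ := mul_nonneg hξ.le hδ0.le
  have hQ1 : |Q - 1| ≤ 3*ξ*δ := by
    have h1 : Q - 1 = (s^2 - r^2)/(t^2 + r^2) := by
      rw [hQdef]; field_simp; ring
    rw [h1, abs_div, abs_of_pos hrp]
    have h2 : |s^2 - r^2| ≤ ξ * (3*r) := by
      have he : s^2 - r^2 = (s - r) * (s + r) := by ring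
      rw [he, abs_mul]
      have e1 : |s - r| ≤ ξ := by rw [abs_sub_comm]; exact hrs
      have e2 : |s + r| ≤ 3*r := by
        rw [abs_of_pos (by linarith only [hs, hr0])]
        linarith only [hs_le]
      exact mul_le_mul e1 e2 (abs_nonneg _) hξ.le
    have h3 : |s^2 - r^2|/(t^2 + r^2) ≤ ξ * (3*r) / r^2 :=
      div_le_div₀ (by positivity) h2 (by positivity)
        (by linarith only [sq_nonneg t])
    have h4 : ξ * (3*r) / r^2 = 3*ξ*(1/r) := by
      field_simp
    have h5 : 3*ξ*(1/r) ≤ 3*ξ*δ := mul_le_mul_of_nonneg_left hinvr (by linarith only [hξ])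
    rw [h4] at h3
    linarith only [h3, h5]
  have h3ξK : 3*ξ ≤ K := by rw [hKdef]; linarith only [hLc3, hρξ, hξ]
  have hQhalf : 1/2 ≤ Q := by
    have hq := (abs_le.mp hQ1).1
    have h1 : 3*ξ*δ ≤ K*δ := mul_le_mul_of_nonneg_right h3ξK hδ0.le
    linarith only [hq, h1, hKδ]
  have hP : |Q ^ (-(5/4:ℝ)) - 1| ≤ K * δ := by
    rw [Real.rpow_def_of_pos hQ0]
    have hlog : |Real.log Q| ≤ 6*ξ*δ := by
      have := abs_log_le hQhalf
      linarith only [this, hQ1]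
    have harg : |Real.log Q * (-(5/4:ℝ))| ≤ 8*ξ*δ := by
      rw [abs_mul, show |(-(5/4:ℝ))| = 5/4 by norm_num]
      linarith only [hlog, hξδ]
    have h8K : 8*ξ ≤ K := by rw [hKdef]; linarith only [hLc3, hρξ, hξ]
    have h8K' : 8*ξ*δ ≤ K*δ := mul_le_mul_of_nonneg_right h8K hδ0.le
    have harg1 : |Real.log Q * (-(5/4:ℝ))| ≤ 1 := by
      linarith only [harg, h8K', hKδ]
    have hee := Real.abs_exp_sub_one_le harg1
    have h16K : 16*ξ ≤ K := by rw [hKdef]; linarith only [hLc3, hρξ, hξ]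
    have h16K' : 16*ξ*δ ≤ K*δ := mul_le_mul_of_nonneg_right h16K hδ0.le
    linarith only [hee, harg, h16K']
  -- factor E
  set w : ℝ := ρ*((Ar - As) + (s - r)) with hwdef
  clear_value w
  have hArAs : (Ar - As)*(Ar + As) = r^2 - s^2 := by
    linear_combination hAr_sq - hAs_sq
  have hsum0 : (0:ℝ) < Ar + As := by linarith only [hAr0, hAs0]
  have hid : (Ar - As) + (s - r) = (s - r)*((Ar + As) - (s + r))/(Ar + As) := by
    rw [eq_div_iff (ne_of_gt hsum0)]
    linear_combination hArAs
  have hgap0 : 0 ≤ (Ar + As) - (s + r) := by linarith only [hArr, hAss]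
  have hgap_le : (Ar + As) - (s + r) ≤ (3/2)*(t^2/r) := by
    have e0 : t^2/(2*s) ≤ t^2/r :=
      div_le_div_of_nonneg_left (by positivity) hr0 (by linarith only [hs_ge])
    have e1 : As - s ≤ t^2/r := le_trans hAss_le e0
    have e2 : Ar - r ≤ t^2/(2*r) := hArr_le
    have e3 : t^2/(2*r) + t^2/r = (3/2)*(t^2/r) := by ring
    linarith only [e1, e2, e3]
  have hw_le : |w| ≤ 2*ρ*ξ*δ := by
    rw [hwdef, hid]
    have h1 : |ρ * ((s - r) * ((Ar + As) - (s + r)) / (Ar + As))|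
        = ρ * (|s - r| * ((Ar + As) - (s + r)) / (Ar + As)) := by
      rw [abs_mul, abs_of_pos hρ0, abs_div, abs_of_pos hsum0, abs_mul,
        abs_of_nonneg hgap0]
    rw [h1]
    have h2 : |s - r| * ((Ar + As) - (s + r)) ≤ ξ * ((3/2)*(t^2/r)) := by
      apply mul_le_mul _ hgap_le hgap0 hξ.le
      rw [abs_sub_comm]; exact hrs
    have h3 : |s - r| * ((Ar + As) - (s + r)) / (Ar + As)
        ≤ ξ * ((3/2)*(t^2/r)) / r :=
      div_le_div₀ (by positivity) h2 hr0 (by linarith only [hArr, hAss, hs_ge, hr0])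
    have h4 : ξ * ((3/2)*(t^2/r)) / r = (3/2)*ξ*(t^2/r^2) := by
      field_simp
    rw [h4] at h3
    have h5 : (3/2)*ξ*(t^2/r^2) ≤ (3/2)*ξ*δ := mul_le_mul_of_nonneg_left ht2r2 (by linarith only [hξ])
    have h6 : ρ * (|s - r| * ((Ar + As) - (s + r)) / (Ar + As))
        ≤ ρ * ((3/2)*ξ*(t^2/r^2)) :=
      mul_le_mul_of_nonneg_left h3 hρ0.le
    have h7 : ρ * ((3/2)*ξ*(t^2/r^2)) ≤ ρ * ((3/2)*ξ*δ) :=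
      mul_le_mul_of_nonneg_left h5 hρ0.le
    have h8 : 0 ≤ ρ*ξ*δ := mul_nonneg (mul_nonneg hρ0.le hξ.le) hδ0.le
    linarith only [h6, h7, h8]
  have hwK : 2*ρ*ξ ≤ K := by rw [hKdef]; linarith only [hLc3, hρξ, hξ]
  have hw1 : |w| ≤ 1 := by
    have h1 : 2*ρ*ξ*δ ≤ K*δ := mul_le_mul_of_nonneg_right hwK hδ0.le
    linarith only [hw_le, h1, hKδ]
  have hE : |Real.exp w - 1| ≤ K * δ := by
    have hee := Real.abs_exp_sub_one_le hw1
    have h4K : 4*ρ*ξ ≤ K := by rw [hKdef]; linarith only [hLc3, hρξ, hξ]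
    have h4K' : 4*ρ*ξ*δ ≤ K*δ := mul_le_mul_of_nonneg_right h4K hδ0.le
    linarith only [hee, hw_le, h4K']
  -- the factorization identity
  have hPr0 : (0:ℝ) < (t^2+r^2) ^ (-(5/4:ℝ)) := Real.rpow_pos_of_pos hrp _
  have hQP : (t^2+s^2) ^ (-(5/4:ℝ)) = Q ^ (-(5/4:ℝ)) * (t^2+r^2) ^ (-(5/4:ℝ)) := by
    rw [hQdef, Real.div_rpow hsp.le hrp.le, div_mul_cancel₀ _ (ne_of_gt hPr0)]
  have hexpfac : Real.exp (-ρ*s - ρ*As)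
      = Real.exp (2*ρ*(r-s)) * Real.exp w * Real.exp (-ρ*r - ρ*Ar) := by
    rw [← Real.exp_add, ← Real.exp_add]
    congr 1
    rw [hwdef]; ring
  have hqr_ne : qProfile mα ρ t r ≠ 0 := by
    unfold qProfile
    rw [← hArdef, ← hurdef]
    exact ne_of_gt (mul_pos (mul_pos (mul_pos (mul_pos hγur_pos ht0) hr0) hPr0)
      (Real.exp_pos _))
  have hfac : qProfile mα ρ t s / qProfile mα ρ t r
      = Real.exp (2*ρ*(r-s)) * (gammaFactor mα ρ us / gammaFactor mα ρ ur * (s/r)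
        * Q ^ (-(5/4:ℝ)) * Real.exp w) := by
    rw [div_eq_iff hqr_ne]
    unfold qProfile
    rw [← hArdef, ← hAsdef, ← hurdef, ← husdef, hQP, hexpfac]
    field_simp
  -- assemble
  have hprod : |gammaFactor mα ρ us / gammaFactor mα ρ ur * (s/r)
      * Q ^ (-(5/4:ℝ)) * Real.exp w - 1| ≤ 9*(K*δ) :=
    prod4_near_one hG hS hP hE (by linarith only [hKδ])
  have hexp_le : Real.exp (2*ρ*(r-s)) ≤ Real.exp (2*ρ*ξ) := by
    apply Real.exp_le_exp.2
    linarith only [mul_le_mul_of_nonneg_left habsrs.2 hρ0.le]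
  have hmain : |qProfile mα ρ t s / qProfile mα ρ t r - Real.exp (2*ρ*(r - s))|
      ≤ Real.exp (2*ρ*ξ) * (9*(K*δ)) := by
    rw [hfac]
    have h1 : Real.exp (2*ρ*(r-s)) * (gammaFactor mα ρ us / gammaFactor mα ρ ur * (s/r)
        * Q ^ (-(5/4:ℝ)) * Real.exp w) - Real.exp (2*ρ*(r - s))
        = Real.exp (2*ρ*(r-s)) * (gammaFactor mα ρ us / gammaFactor mα ρ ur * (s/r)
        * Q ^ (-(5/4:ℝ)) * Real.exp w - 1) := by ring
    rw [h1, abs_mul, abs_of_pos (Real.exp_pos _)]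
    exact mul_le_mul hexp_le hprod (abs_nonneg _) (Real.exp_pos _).le
  have hδ4 : δ ≤ t ^ (-2 + 4*ε) := by
    rw [hδdef]
    exact Real.rpow_le_rpow_of_exponent_le ht1 (by linarith only [hε])
  calc |qProfile mα ρ t s / qProfile mα ρ t r - Real.exp (2*ρ*(r - s))|
      ≤ Real.exp (2*ρ*ξ) * (9*(K*δ)) := hmain
    _ = 9*K*Real.exp (2*ρ*ξ) * δ := by ring
    _ ≤ 9*K*Real.exp (2*ρ*ξ) * t ^ (-2 + 4*ε) :=
        mul_le_mul_of_nonneg_left hδ4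
          (mul_nonneg (mul_nonneg (by norm_num) hKpos.le) (Real.exp_pos _).le)
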